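/- For all 0 < p < q < ∞ there exist constants 0 < c ≤ C, depending only on p and q, such that for every finite family 𝓘 of dyadic intervals in ℝ and every family of complex numbers (a_I)_{I∈𝓘} one has c · ‖(a_I)‖_{BMO(p)} ≤ ‖(a_I)‖_{BMO(q)} ≤ C · ‖(a_I)‖_{BMO(p)}. -/

import Mathlib

open MeasureTheory Set

noncomputable section

attribute [local instance] Classical.propDecidable

/-- The dyadic interval [2^j k, 2^j (k+1)) encoded by the pair (j,k). -/
def dyadicSet (p : ℤ × ℤ) : Set ℝ :=
  Ico ((2:ℝ) ^ p.1 * p.2) ((2:ℝ) ^ p.1 * (p.2 + 1))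

/-- The length of the dyadic interval encoded by (j,k). -/
def dyadicLen (p : ℤ × ℤ) : ℝ := (2:ℝ) ^ p.1

/-- The phase-space BMO(r) norm of a family of complex numbers indexed by a finite family
of dyadic intervals:
`‖(a_I)‖_{BMO(r)} = sup_{I₀∈𝓘} |I₀|^{−1/r} (∫ (Σ_{I⊆I₀} |a_I|²/|I| · 1_I)^{r/2})^{1/r}`. -/
def bmoNorm (𝓘 : Finset (ℤ × ℤ)) (a : ℤ × ℤ → ℂ) (r : ℝ) : ℝ :=
  ⨆ I₀ : {p // p ∈ 𝓘},
    dyadicLen I₀.1 ^ (-(1:ℝ)/r) *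
      (∫ x : ℝ,
        (∑ I ∈ 𝓘.filter (fun I => dyadicSet I ⊆ dyadicSet I₀.1),
          ‖a I‖ ^ 2 / dyadicLen I *
            (dyadicSet I).indicator (fun _ => (1:ℝ)) x) ^ (r/2)) ^ (1/r)

namespace JN

local notation "S" => dyadicSet

lemma len_pos (P : ℤ × ℤ) : 0 < dyadicLen P := zpow_pos (by norm_num) _

lemma lt_right (P : ℤ × ℤ) : (2:ℝ) ^ P.1 * P.2 < (2:ℝ) ^ P.1 * (P.2 + 1) := by
  have := len_pos P
  rw [dyadicLen] at this
  nlinarith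

lemma S_nonempty (P : ℤ × ℤ) : (S P).Nonempty :=
  ⟨(2:ℝ) ^ P.1 * P.2, le_refl _, lt_right P⟩

lemma volume_S (P : ℤ × ℤ) : volume (S P) = ENNReal.ofReal (dyadicLen P) := by
  rw [dyadicSet, Real.volume_Ico, dyadicLen]
  congr 1
  ring

lemma nested {P Q : ℤ × ℤ} (h : P.1 ≤ Q.1) (hx : (S P ∩ S Q).Nonempty) : S P ⊆ S Q := by
  obtain ⟨x, hxP, hxQ⟩ := hx
  obtain ⟨j, k⟩ := P
  obtain ⟨i, m⟩ := Q
  simp only [dyadicSet, mem_Ico] at hxP hxQ ⊢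
  simp only at h
  set d : ℕ := (i - j).toNat with hd
  have hdi : (2:ℝ) ^ i = 2 ^ j * 2 ^ (d:ℤ) := by
    rw [← zpow_add₀ (by norm_num : (2:ℝ) ≠ 0)]
    congr 1
    omega
  have h2d : (((2:ℤ) ^ d : ℤ) : ℝ) = (2:ℝ) ^ (d:ℤ) := by
    push_cast
    norm_num [zpow_natCast]
  have hj : (0:ℝ) < 2 ^ j := zpow_pos (by norm_num) _
  have h1 : (2:ℝ) ^ i * m < 2 ^ j * (k + 1) := lt_of_le_of_lt hxQ.1 hxP.2
  have h2 : (2:ℝ) ^ j * k < 2 ^ i * (m + 1) := lt_of_le_of_lt hxP.1 hxQ.2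
  rw [hdi] at h1 h2
  have h1r : (2:ℝ) ^ (d:ℤ) * m < (k + 1 : ℝ) := by
    have := (mul_lt_mul_iff_right₀ hj).mpr (lt_of_le_of_lt (le_refl _) h1)
    nlinarith
  have h2r : ((k:ℝ)) < 2 ^ (d:ℤ) * (m + 1) := by nlinarith
  have h1' : (2:ℤ) ^ d * m < k + 1 := by
    have : (((2:ℤ) ^ d * m : ℤ) : ℝ) < ((k + 1 : ℤ) : ℝ) := by push_cast [← h2d] at h1r ⊢; linarith
    exact_mod_cast this
  have h2' : (k:ℤ) < 2 ^ d * (m + 1) := by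
    have : ((k : ℤ) : ℝ) < (((2:ℤ) ^ d * (m+1) : ℤ) : ℝ) := by push_cast [← h2d] at h2r ⊢; linarith
    exact_mod_cast this
  have hA : (2:ℤ) ^ d * m ≤ k := by omega
  have hB : k + 1 ≤ 2 ^ d * (m + 1) := by omega
  have hA' : (2:ℝ) ^ (d:ℤ) * m ≤ (k:ℝ) := by
    have : (((2:ℤ) ^ d * m : ℤ) : ℝ) ≤ ((k : ℤ) : ℝ) := by exact_mod_cast hA
    push_cast [← h2d] at this ⊢; linarith
  have hB' : ((k:ℝ) + 1) ≤ (2:ℝ) ^ (d:ℤ) * (m + 1) := by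
    have : ((k + 1 : ℤ) : ℝ) ≤ (((2:ℤ) ^ d * (m+1) : ℤ) : ℝ) := by exact_mod_cast hB
    push_cast [← h2d] at this ⊢; linarith
  apply Ico_subset_Ico
  · rw [hdi]
    calc (2:ℝ) ^ j * 2 ^ (d:ℤ) * m = 2 ^ j * (2 ^ (d:ℤ) * m) := by ring
    _ ≤ 2 ^ j * k := by nlinarith
  · rw [hdi]
    calc (2:ℝ) ^ j * (k+1) ≤ 2 ^ j * (2 ^ (d:ℤ) * (m+1)) := by nlinarith
    _ = 2 ^ j * 2 ^ (d:ℤ) * (m+1) := by ring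

lemma subset_scale {P Q : ℤ × ℤ} (h : S P ⊆ S Q) : P.1 ≤ Q.1 := by
  have hv := measure_mono (μ := volume) h
  rw [volume_S, volume_S] at hv
  have := (ENNReal.ofReal_le_ofReal_iff (len_pos Q).le).mp hv
  rw [dyadicLen, dyadicLen] at this
  exact (zpow_le_zpow_iff_right₀ (by norm_num : (1:ℝ) < 2)).mp this

lemma S_inj {P Q : ℤ × ℤ} (h : S P = S Q) : P = Q := by
  rw [dyadicSet, dyadicSet] at h
  rw [Set.Ico_eq_Ico_iff (Or.inl (lt_right P))] at h
  obtain ⟨h1, h2⟩ := h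
  have hlen : (2:ℝ) ^ P.1 = (2:ℝ) ^ Q.1 := by nlinarith
  have hj : P.1 = Q.1 := by
    exact zpow_right_injective₀ (by norm_num : (0:ℝ) < 2) (by norm_num : (2:ℝ) ≠ 1) hlen
  have hp := len_pos P
  rw [dyadicLen] at hp
  have hk : (P.2 : ℝ) = Q.2 := by
    rw [hj] at h1 hp
    exact mul_left_cancel₀ (ne_of_gt hp) h1
  have : P.2 = Q.2 := by exact_mod_cast hk
  exact Prod.ext hj this

lemma eq_of_scale_eq_mem {P Q : ℤ × ℤ} (h : P.1 = Q.1) {x : ℝ} (hP : x ∈ S P) (hQ : x ∈ S Q) :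
    P = Q := by
  apply S_inj
  apply Set.Subset.antisymm
  · exact nested h.le ⟨x, hP, hQ⟩
  · exact nested h.ge ⟨x, hQ, hP⟩

lemma mem_floor (j : ℤ) (x : ℝ) : x ∈ S (j, ⌊x / 2 ^ j⌋) := by
  have hj : (0:ℝ) < 2 ^ j := zpow_pos (by norm_num) _
  constructor
  · simp only
    rw [mul_comm]
    exact (le_div_iff₀ hj).mp (Int.floor_le _)
  · simp only
    have := Int.lt_floor_add_one (x / 2 ^ j)
    calc x = x / 2 ^ j * 2 ^ j := by field_simp
    _ < (⌊x / 2 ^ j⌋ + 1) * 2 ^ j := by nlinarith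
    _ = 2 ^ j * (⌊x / 2 ^ j⌋ + 1) := by ring

lemma exists_parent (P : ℤ × ℤ) : ∃ P' : ℤ × ℤ, S P ⊆ S P' ∧ P'.1 = P.1 + 1 := by
  obtain ⟨j, k⟩ := P
  rcases Int.even_or_odd k with ⟨m, hm⟩ | ⟨m, hm⟩
  · refine ⟨(j+1, m), ?_, rfl⟩
    apply Ico_subset_Ico <;>
    · simp only [dyadicSet]
      rw [zpow_add_one₀ (by norm_num : (2:ℝ) ≠ 0), hm]
      push_cast
      have hj : (0:ℝ) < 2 ^ j := zpow_pos (by norm_num) _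
      nlinarith
  · refine ⟨(j+1, m), ?_, rfl⟩
    apply Ico_subset_Ico <;>
    · simp only [dyadicSet]
      rw [zpow_add_one₀ (by norm_num : (2:ℝ) ≠ 0), hm]
      push_cast
      have hj : (0:ℝ) < 2 ^ j := zpow_pos (by norm_num) _
      nlinarith

lemma parent_min {P P' I : ℤ × ℤ} (hp : S P ⊆ S P') (hs : P'.1 = P.1 + 1)
    (hPI : S P ⊂ S I) : S P' ⊆ S I := by
  have h1 : P.1 ≤ I.1 := subset_scale hPI.subset
  obtain ⟨x, hx⟩ := S_nonempty P
  have hxI : x ∈ S I := hPI.subset hx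
  have hxP' : x ∈ S P' := hp hx
  have h2 : P.1 ≠ I.1 := by
    intro h
    exact hPI.ne (congrArg S (eq_of_scale_eq_mem h hx hxI)) 
  have : P'.1 ≤ I.1 := by omega
  exact nested this ⟨x, hxP', hxI⟩

end JN

namespace JN
open MeasureTheory Set

local notation "S" => dyadicSet

variable (𝓘 : Finset (ℤ × ℤ)) (a : ℤ × ℤ → ℂ)

def cf (I : ℤ × ℤ) : ℝ := ‖a I‖ ^ 2 / dyadicLen I

def ff (J : ℤ × ℤ) : ℝ → ℝ := fun x =>
  ∑ I ∈ 𝓘.filter (fun I => S I ⊆ S J),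
    ‖a I‖ ^ 2 / dyadicLen I * (S I).indicator (fun _ => (1:ℝ)) x

lemma bmoNorm_eq (r : ℝ) :
    bmoNorm 𝓘 a r = ⨆ I₀ : {p // p ∈ 𝓘},
      dyadicLen I₀.1 ^ (-(1:ℝ)/r) * (∫ x : ℝ, (ff 𝓘 a I₀.1 x) ^ (r/2)) ^ (1/r) := rfl

lemma cf_nonneg (I : ℤ × ℤ) : 0 ≤ cf a I :=
  div_nonneg (by positivity) (len_pos I).le

lemma meas_S (P : ℤ × ℤ) : MeasurableSet (S P) := measurableSet_Ico

lemma indicator_nonneg' (I : ℤ × ℤ) (x : ℝ) : 0 ≤ (S I).indicator (fun _ => (1:ℝ)) x :=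
  Set.indicator_nonneg (fun _ _ => zero_le_one) x

lemma term_nonneg (I : ℤ × ℤ) (x : ℝ) :
    0 ≤ ‖a I‖ ^ 2 / dyadicLen I * (S I).indicator (fun _ => (1:ℝ)) x :=
  mul_nonneg (cf_nonneg a I) (indicator_nonneg' I x)

lemma ff_nonneg (J : ℤ × ℤ) (x : ℝ) : 0 ≤ ff 𝓘 a J x :=
  Finset.sum_nonneg fun I _ => term_nonneg a I x

lemma ff_measurable (J : ℤ × ℤ) : Measurable (ff 𝓘 a J) := by
  unfold ff
  apply Finset.measurable_sum
  intro I _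
  exact (measurable_const.indicator (meas_S I)).const_mul _

lemma rpow_ff_measurable (J : ℤ × ℤ) {s : ℝ} (hs : 0 ≤ s) :
    Measurable (fun x => ff 𝓘 a J x ^ s) :=
  (Real.continuous_rpow_const hs).measurable.comp (ff_measurable 𝓘 a J)

lemma term_eq_of_mem (I : ℤ × ℤ) {x : ℝ} (hx : x ∈ S I) :
    ‖a I‖ ^ 2 / dyadicLen I * (S I).indicator (fun _ => (1:ℝ)) x = cf a I := by
  rw [Set.indicator_of_mem hx, cf, mul_one]

lemma term_eq_of_not_mem (I : ℤ × ℤ) {x : ℝ} (hx : x ∉ S I) :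
    ‖a I‖ ^ 2 / dyadicLen I * (S I).indicator (fun _ => (1:ℝ)) x = 0 := by
  rw [Set.indicator_of_notMem hx, mul_zero]

lemma ff_eq_zero_of_not_mem (J : ℤ × ℤ) {x : ℝ} (hx : x ∉ S J) : ff 𝓘 a J x = 0 := by
  apply Finset.sum_eq_zero
  intro I hI
  rw [Finset.mem_filter] at hI
  exact term_eq_of_not_mem a I (fun h => hx (hI.2 h))

lemma mem_of_ff_pos {J : ℤ × ℤ} {x : ℝ} (h : 0 < ff 𝓘 a J x) : x ∈ S J := by
  by_contra hx
  rw [ff_eq_zero_of_not_mem 𝓘 a J hx] at h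
  exact lt_irrefl 0 h

lemma ff_le_const (J : ℤ × ℤ) (x : ℝ) :
    ff 𝓘 a J x ≤ ∑ I ∈ 𝓘.filter (fun I => S I ⊆ S J), cf a I := by
  apply Finset.sum_le_sum
  intro I _
  by_cases hx : x ∈ S I
  · rw [term_eq_of_mem a I hx]
  · rw [term_eq_of_not_mem a I hx]; exact cf_nonneg a I

lemma cf_le_ff {J : ℤ × ℤ} (hJ : J ∈ 𝓘) {x : ℝ} (hx : x ∈ S J) : cf a J ≤ ff 𝓘 a J x := by
  have hmem : J ∈ 𝓘.filter (fun I => S I ⊆ S J) := by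
    rw [Finset.mem_filter]; exact ⟨hJ, subset_rfl⟩
  calc cf a J = ‖a J‖ ^ 2 / dyadicLen J * (S J).indicator (fun _ => (1:ℝ)) x :=
        (term_eq_of_mem a J hx).symm
  _ ≤ ff 𝓘 a J x := Finset.single_le_sum (fun I _ => term_nonneg a I x) hmem

lemma integrable_rpow_ff (J : ℤ × ℤ) {s : ℝ} (hs : 0 < s) :
    Integrable (fun x => ff 𝓘 a J x ^ s) := by
  set B := ∑ I ∈ 𝓘.filter (fun I => S I ⊆ S J), cf a I with hB
  have hB0 : 0 ≤ B := Finset.sum_nonneg fun I _ => cf_nonneg a I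
  apply Integrable.mono' (g := (S J).indicator (fun _ => B ^ s))
  · rw [integrable_indicator_iff (meas_S J)]
    apply (integrableOn_const_iff (by simp)).mpr
    right
    rw [volume_S]
    exact ENNReal.ofReal_lt_top
  · exact (rpow_ff_measurable 𝓘 a J hs.le).aestronglyMeasurable
  · apply Filter.Eventually.of_forall
    intro x
    rw [Real.norm_eq_abs, abs_of_nonneg (Real.rpow_nonneg (ff_nonneg 𝓘 a J x) s)]
    by_cases hx : x ∈ S J
    · rw [Set.indicator_of_mem hx]
      exact Real.rpow_le_rpow (ff_nonneg 𝓘 a J x) (ff_le_const 𝓘 a J x) hs.le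
    · rw [Set.indicator_of_notMem hx, ff_eq_zero_of_not_mem 𝓘 a J hx,
        Real.zero_rpow (ne_of_gt hs)]

lemma ofReal_integral_rpow (J : ℤ × ℤ) {s : ℝ} (hs : 0 < s) :
    ENNReal.ofReal (∫ x : ℝ, ff 𝓘 a J x ^ s) = ∫⁻ x : ℝ, ENNReal.ofReal (ff 𝓘 a J x ^ s) :=
  MeasureTheory.ofReal_integral_eq_lintegral_ofReal (integrable_rpow_ff 𝓘 a J hs)
    (Filter.Eventually.of_forall fun x => Real.rpow_nonneg (ff_nonneg 𝓘 a J x) s)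

lemma integral_rpow_nonneg (J : ℤ × ℤ) (s : ℝ) : 0 ≤ ∫ x : ℝ, ff 𝓘 a J x ^ s :=
  integral_nonneg fun x => Real.rpow_nonneg (ff_nonneg 𝓘 a J x) s

lemma bmo_nonneg (r : ℝ) : 0 ≤ bmoNorm 𝓘 a r := by
  rw [bmoNorm_eq]
  apply Real.iSup_nonneg
  intro I₀
  exact mul_nonneg (Real.rpow_nonneg (len_pos I₀.1).le _)
    (Real.rpow_nonneg (integral_rpow_nonneg 𝓘 a I₀.1 _) _)

lemma term_le_bmo {I₀ : ℤ × ℤ} (h : I₀ ∈ 𝓘) (r : ℝ) :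
    dyadicLen I₀ ^ (-(1:ℝ)/r) * (∫ x : ℝ, ff 𝓘 a I₀ x ^ (r/2)) ^ ((1:ℝ)/r) ≤ bmoNorm 𝓘 a r := by
  rw [bmoNorm_eq]
  exact le_ciSup (f := fun I₀ : {p // p ∈ 𝓘} =>
      dyadicLen I₀.1 ^ (-(1:ℝ)/r) * (∫ x : ℝ, (ff 𝓘 a I₀.1 x) ^ (r/2)) ^ (1/r))
    (Set.Finite.bddAbove (Set.finite_range _)) (⟨I₀, h⟩ : {p // p ∈ 𝓘})

lemma integral_le_of_mem {I₀ : ℤ × ℤ} (h : I₀ ∈ 𝓘) {r : ℝ} (hr : 0 < r) :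
    ∫ x : ℝ, ff 𝓘 a I₀ x ^ (r/2) ≤ bmoNorm 𝓘 a r ^ r * dyadicLen I₀ := by
  set N := bmoNorm 𝓘 a r with hN
  have hterm : dyadicLen I₀ ^ (-(1:ℝ)/r) * (∫ x : ℝ, ff 𝓘 a I₀ x ^ (r/2)) ^ ((1:ℝ)/r) ≤ N :=
    term_le_bmo 𝓘 a h r
  set T := ∫ x : ℝ, ff 𝓘 a I₀ x ^ (r/2) with hT
  have hT0 : 0 ≤ T := integral_rpow_nonneg 𝓘 a I₀ _
  have hlen := len_pos I₀
  have hN0 : 0 ≤ N := bmo_nonneg 𝓘 a r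
  have hkey : T ^ ((1:ℝ)/r) ≤ N * dyadicLen I₀ ^ ((1:ℝ)/r) := by
    have h1 : dyadicLen I₀ ^ (-(1:ℝ)/r) * dyadicLen I₀ ^ ((1:ℝ)/r) = 1 := by
      rw [← Real.rpow_add hlen, show (-(1:ℝ)/r + 1/r) = 0 by ring, Real.rpow_zero]
    calc T ^ ((1:ℝ)/r) = dyadicLen I₀ ^ (-(1:ℝ)/r) * T ^ ((1:ℝ)/r) * dyadicLen I₀ ^ ((1:ℝ)/r) := by
          rw [mul_comm (dyadicLen I₀ ^ (-(1:ℝ)/r)) (T ^ ((1:ℝ)/r)), mul_assoc, h1, mul_one]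
    _ ≤ N * dyadicLen I₀ ^ ((1:ℝ)/r) :=
        mul_le_mul_of_nonneg_right hterm (Real.rpow_nonneg hlen.le _)
  have hrr : ((1:ℝ)/r) * r = 1 := by field_simp
  calc T = (T ^ ((1:ℝ)/r)) ^ r := by
        rw [← Real.rpow_mul hT0, hrr, Real.rpow_one]
  _ ≤ (N * dyadicLen I₀ ^ ((1:ℝ)/r)) ^ r :=
        Real.rpow_le_rpow (Real.rpow_nonneg hT0 _) hkey hr.le
  _ = N ^ r * dyadicLen I₀ := by
        rw [Real.mul_rpow hN0 (Real.rpow_nonneg hlen.le _), ← Real.rpow_mul hlen.le, hrr,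
          Real.rpow_one]

lemma cf_le_sq {I : ℤ × ℤ} (h : I ∈ 𝓘) {r : ℝ} (hr : 0 < r) :
    cf a I ≤ bmoNorm 𝓘 a r ^ (2:ℝ) := by
  set N := bmoNorm 𝓘 a r with hN
  have hN0 : 0 ≤ N := bmo_nonneg 𝓘 a r
  have hc0 : 0 ≤ cf a I := cf_nonneg a I
  have hlen := len_pos I
  have hint : cf a I ^ (r/2) * dyadicLen I ≤ N ^ r * dyadicLen I := by
    have hlow : ∫ x : ℝ, (S I).indicator (fun _ => cf a I ^ (r/2)) x ≤
        ∫ x : ℝ, ff 𝓘 a I x ^ (r/2) := by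
      apply integral_mono _ (integrable_rpow_ff 𝓘 a I (by positivity : (0:ℝ) < r/2))
      · intro x
        by_cases hx : x ∈ S I
        · rw [Set.indicator_of_mem hx]
          exact Real.rpow_le_rpow hc0 (cf_le_ff 𝓘 a h hx) (by positivity)
        · rw [Set.indicator_of_notMem hx]
          exact Real.rpow_nonneg (ff_nonneg 𝓘 a I x) _
      · rw [integrable_indicator_iff (meas_S I)]
        apply (integrableOn_const_iff (by simp)).mpr
        right
        rw [volume_S]
        exact ENNReal.ofReal_lt_top
    have heq : ∫ x : ℝ, (S I).indicator (fun _ => cf a I ^ (r/2)) x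
        = cf a I ^ (r/2) * dyadicLen I := by
      rw [integral_indicator_const _ (meas_S I), Measure.real, volume_S, smul_eq_mul,
        ENNReal.toReal_ofReal hlen.le, mul_comm]
    rw [← heq]
    exact le_trans hlow (integral_le_of_mem 𝓘 a h hr)
  have h2 : cf a I ^ (r/2) ≤ N ^ r :=
    le_of_mul_le_mul_right (by linarith [hint]) hlen
  calc cf a I = (cf a I ^ (r/2)) ^ ((2:ℝ)/r) := by
        rw [← Real.rpow_mul hc0, show r/2 * ((2:ℝ)/r) = 1 by field_simp, Real.rpow_one]
  _ ≤ (N ^ r) ^ ((2:ℝ)/r) :=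
        Real.rpow_le_rpow (Real.rpow_nonneg hc0 _) h2 (by positivity)
  _ = N ^ (2:ℝ) := by
        rw [← Real.rpow_mul hN0, show r * ((2:ℝ)/r) = 2 by field_simp]

end JN
namespace JN
open MeasureTheory Set

local notation "S" => dyadicSet

variable (𝓘 : Finset (ℤ × ℤ)) (a : ℤ × ℤ → ℂ)

lemma nested_total {P Q : ℤ × ℤ} (hx : (S P ∩ S Q).Nonempty) : S P ⊆ S Q ∨ S Q ⊆ S P := by
  rcases le_total P.1 Q.1 with h | h
  · exact Or.inl (nested h hx)
  · exact Or.inr (nested h ⟨hx.choose, hx.choose_spec.2, hx.choose_spec.1⟩)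

lemma exists_maximal_above (T : Finset (ℤ × ℤ)) {I : ℤ × ℤ} (hI : I ∈ T) :
    ∃ M ∈ T, S I ⊆ S M ∧ ∀ I' ∈ T, S M ⊆ S I' → I' = M := by
  classical
  set U := T.filter (fun I' => S I ⊆ S I') with hU
  have hIU : I ∈ U := by rw [hU, Finset.mem_filter]; exact ⟨hI, subset_rfl⟩
  obtain ⟨M, hMU, hMmax⟩ := Finset.exists_max_image U (fun P => P.1) ⟨I, hIU⟩
  rw [hU, Finset.mem_filter] at hMU
  refine ⟨M, hMU.1, hMU.2, ?_⟩
  intro I' hI' hMI'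
  have hI'U : I' ∈ U := by
    rw [hU, Finset.mem_filter]; exact ⟨hI', hMU.2.trans hMI'⟩
  have h1 : I'.1 ≤ M.1 := hMmax I' hI'U
  have h2 : M.1 ≤ I'.1 := subset_scale hMI'
  obtain ⟨x, hx⟩ := S_nonempty M
  exact eq_of_scale_eq_mem (le_antisymm h1 h2) (hMI' hx) hx

def maxSet (J : ℤ × ℤ) : Finset (ℤ × ℤ) :=
  (𝓘.filter (fun I => S I ⊆ S J)).filter
    (fun M => ∀ I' ∈ 𝓘.filter (fun I => S I ⊆ S J), S M ⊆ S I' → I' = M)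

lemma maxSet_disjoint (J : ℤ × ℤ) : (↑(maxSet 𝓘 J) : Set (ℤ × ℤ)).PairwiseDisjoint S := by
  intro M₁ h₁ M₂ h₂ hne
  rw [Finset.mem_coe, maxSet, Finset.mem_filter] at h₁ h₂
  rw [Function.onFun]
  by_contra hdis
  obtain ⟨x, hx1, hx2⟩ := Set.not_disjoint_iff.mp hdis
  rcases nested_total ⟨x, hx1, hx2⟩ with h | h
  · exact hne (h₁.2 M₂ h₂.1 h).symm
  · exact hne (h₂.2 M₁ h₁.1 h)

lemma ff_le_max {J M : ℤ × ℤ} (hM : M ∈ maxSet 𝓘 J) {x : ℝ} (hx : x ∈ S M) :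
    ff 𝓘 a J x ≤ ff 𝓘 a M x := by
  classical
  rw [maxSet, Finset.mem_filter] at hM
  obtain ⟨hMT, hMmax⟩ := hM
  have hMJ : S M ⊆ S J := (Finset.mem_filter.mp hMT).2
  rw [ff, ff, ← Finset.sum_filter_add_sum_filter_not (𝓘.filter (fun I => S I ⊆ S J))
    (fun I => S I ⊆ S M)]
  have hz : ∑ I ∈ (𝓘.filter (fun I => S I ⊆ S J)).filter (fun I => ¬ S I ⊆ S M),
      ‖a I‖ ^ 2 / dyadicLen I * (S I).indicator (fun _ => (1:ℝ)) x = 0 := by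
    apply Finset.sum_eq_zero
    intro I hI
    rw [Finset.mem_filter] at hI
    by_cases hxI : x ∈ S I
    · exfalso
      rcases nested_total ⟨x, hxI, hx⟩ with h | h
      · exact hI.2 h
      · have := hMmax I hI.1 h
        rw [this] at hI
        exact hI.2 subset_rfl
    · exact term_eq_of_not_mem a I hxI
  rw [hz, add_zero]
  have hfilter : (𝓘.filter (fun I => S I ⊆ S J)).filter (fun I => S I ⊆ S M)
      = 𝓘.filter (fun I => S I ⊆ S M) := by
    rw [Finset.filter_filter]
    apply Finset.filter_congr
    intro I _
    constructor
    · intro h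
      exact h.2
    · intro h
      exact ⟨h.trans hMJ, h⟩
  rw [hfilter]

lemma lintegral_rpow_ff_le (s : ℝ) (hs : 0 < s) (Ap : ℝ)
    (hAp : ∀ I₀ ∈ 𝓘, (∫ x : ℝ, ff 𝓘 a I₀ x ^ s) ≤ Ap * dyadicLen I₀) (J : ℤ × ℤ) :
    ∫⁻ x : ℝ, ENNReal.ofReal (ff 𝓘 a J x ^ s) ≤ ENNReal.ofReal Ap * volume (S J) := by
  classical
  have hpt : ∀ x : ℝ, ENNReal.ofReal (ff 𝓘 a J x ^ s)
      ≤ ∑ M ∈ maxSet 𝓘 J, ENNReal.ofReal (ff 𝓘 a M x ^ s) := by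
    intro x
    by_cases hx : 0 < ff 𝓘 a J x
    · -- find I ∋ x in the filter, then a maximal M above it
      have : ∃ I ∈ 𝓘.filter (fun I => S I ⊆ S J), x ∈ S I := by
        by_contra hcon
        push_neg at hcon
        have : ff 𝓘 a J x = 0 :=
          Finset.sum_eq_zero fun I hI => term_eq_of_not_mem a I (hcon I hI)
        rw [this] at hx
        exact lt_irrefl 0 hx
      obtain ⟨I, hI, hxI⟩ := this
      obtain ⟨M, hMT, hIM, hMmax⟩ := exists_maximal_above (𝓘.filter (fun I => S I ⊆ S J)) hI
      have hMmem : M ∈ maxSet 𝓘 J := by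
        rw [maxSet, Finset.mem_filter]
        exact ⟨hMT, hMmax⟩
      have hxM : x ∈ S M := hIM hxI
      have h1 : ff 𝓘 a J x ≤ ff 𝓘 a M x := ff_le_max 𝓘 a hMmem hxM
      calc ENNReal.ofReal (ff 𝓘 a J x ^ s) ≤ ENNReal.ofReal (ff 𝓘 a M x ^ s) :=
            ENNReal.ofReal_le_ofReal (Real.rpow_le_rpow (ff_nonneg 𝓘 a J x) h1 hs.le)
      _ ≤ ∑ M' ∈ maxSet 𝓘 J, ENNReal.ofReal (ff 𝓘 a M' x ^ s) :=
            Finset.single_le_sum (f := fun M' => ENNReal.ofReal (ff 𝓘 a M' x ^ s))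
              (fun _ _ => zero_le) hMmem
    · have h0 : ff 𝓘 a J x = 0 := le_antisymm (not_lt.mp hx) (ff_nonneg 𝓘 a J x)
      rw [h0, Real.zero_rpow (ne_of_gt hs), ENNReal.ofReal_zero]
      exact zero_le
  calc ∫⁻ x : ℝ, ENNReal.ofReal (ff 𝓘 a J x ^ s)
      ≤ ∫⁻ x : ℝ, ∑ M ∈ maxSet 𝓘 J, ENNReal.ofReal (ff 𝓘 a M x ^ s) := lintegral_mono hpt
  _ = ∑ M ∈ maxSet 𝓘 J, ∫⁻ x : ℝ, ENNReal.ofReal (ff 𝓘 a M x ^ s) :=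
      lintegral_finset_sum _ (fun M _ => (rpow_ff_measurable 𝓘 a M hs.le).ennreal_ofReal)
  _ ≤ ∑ M ∈ maxSet 𝓘 J, ENNReal.ofReal Ap * volume (S M) := by
      apply Finset.sum_le_sum
      intro M hM
      have hM𝓘 : M ∈ 𝓘 := by
        rw [maxSet, Finset.mem_filter, Finset.mem_filter] at hM
        exact hM.1.1
      rw [← ofReal_integral_rpow 𝓘 a M hs, volume_S, ← ENNReal.ofReal_mul']
      · exact ENNReal.ofReal_le_ofReal (hAp M hM𝓘)
      · exact (len_pos M).le
  _ = ENNReal.ofReal Ap * ∑ M ∈ maxSet 𝓘 J, volume (S M) := by rw [Finset.mul_sum]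
  _ = ENNReal.ofReal Ap * volume (⋃ M ∈ maxSet 𝓘 J, S M) := by
      rw [measure_biUnion_finset (maxSet_disjoint 𝓘 J) (fun M _ => meas_S M)]
  _ ≤ ENNReal.ofReal Ap * volume (S J) := by
      apply mul_le_mul_right
      apply measure_mono
      apply Set.iUnion₂_subset
      intro M hM
      rw [maxSet, Finset.mem_filter, Finset.mem_filter] at hM
      exact hM.1.2

lemma cheb (J : ℤ × ℤ) {t s : ℝ} (ht : 0 < t) (hs : 0 < s) :
    volume {x : ℝ | t < ff 𝓘 a J x}
      ≤ (ENNReal.ofReal (t ^ s))⁻¹ * ∫⁻ x : ℝ, ENNReal.ofReal (ff 𝓘 a J x ^ s) := by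
  set A := ENNReal.ofReal (t ^ s) with hA
  have hA0 : A ≠ 0 := by
    rw [hA, ne_eq, ENNReal.ofReal_eq_zero, not_le]
    positivity
  have hAtop : A ≠ ⊤ := ENNReal.ofReal_ne_top
  have hsub : {x : ℝ | t < ff 𝓘 a J x} ⊆ {x : ℝ | A ≤ ENNReal.ofReal (ff 𝓘 a J x ^ s)} := by
    intro x hx
    rw [Set.mem_setOf_eq] at hx ⊢
    rw [hA]
    exact ENNReal.ofReal_le_ofReal (Real.rpow_le_rpow ht.le hx.le hs.le)
  have hmm := MeasureTheory.mul_meas_ge_le_lintegral₀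
    (μ := volume) ((rpow_ff_measurable 𝓘 a J hs.le).ennreal_ofReal.aemeasurable) A
  calc volume {x : ℝ | t < ff 𝓘 a J x}
      ≤ volume {x : ℝ | A ≤ ENNReal.ofReal (ff 𝓘 a J x ^ s)} := measure_mono hsub
  _ = A⁻¹ * (A * volume {x : ℝ | A ≤ ENNReal.ofReal (ff 𝓘 a J x ^ s)}) := by
      rw [← mul_assoc, ENNReal.inv_mul_cancel hA0 hAtop, one_mul]
  _ ≤ A⁻¹ * ∫⁻ x : ℝ, ENNReal.ofReal (ff 𝓘 a J x ^ s) := mul_le_mul_right hmm _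

end JN
namespace JN
open MeasureTheory Set

local notation "S" => dyadicSet

variable (𝓘 : Finset (ℤ × ℤ)) (a : ℤ × ℤ → ℂ)

def gg (J J' : ℤ × ℤ) : ℝ :=
  ∑ I ∈ 𝓘.filter (fun I => S J' ⊆ S I ∧ S J' ≠ S I ∧ S I ⊆ S J), cf a I

lemma gg_nonneg (J J' : ℤ × ℤ) : 0 ≤ gg 𝓘 a J J' :=
  Finset.sum_nonneg fun I _ => cf_nonneg a I

/-- Pointwise decomposition: for `x ∈ J' ⊆ J`, `f_J x = g_{J,J'} + f_{J'} x`. -/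
lemma ff_decomp {J J' : ℤ × ℤ} {x : ℝ} (hx : x ∈ S J') (hJJ : S J' ⊆ S J) :
    ff 𝓘 a J x = gg 𝓘 a J J' + ff 𝓘 a J' x := by
  classical
  rw [ff, ← Finset.sum_filter_add_sum_filter_not (𝓘.filter (fun I => S I ⊆ S J))
    (fun I => S I ⊆ S J'), add_comm]
  congr 1
  · -- the strictly-larger part equals gg
    have hsub : 𝓘.filter (fun I => S J' ⊆ S I ∧ S J' ≠ S I ∧ S I ⊆ S J)
        ⊆ (𝓘.filter (fun I => S I ⊆ S J)).filter (fun I => ¬ S I ⊆ S J') := by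
      intro I hI
      rw [Finset.mem_filter] at hI
      obtain ⟨hI𝓘, h1, h2, h3⟩ := hI
      rw [Finset.mem_filter, Finset.mem_filter]
      refine ⟨⟨hI𝓘, h3⟩, fun hcon => h2 (Set.Subset.antisymm h1 hcon)⟩
    rw [← Finset.sum_subset hsub]
    · apply Finset.sum_congr rfl
      intro I hI
      rw [Finset.mem_filter] at hI
      exact term_eq_of_mem a I (hI.2.1 hx)
    · intro I hI hIn
      rw [Finset.mem_filter, Finset.mem_filter] at hI
      by_cases hxI : x ∈ S I
      · exfalso
        apply hIn
        rw [Finset.mem_filter]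
        have hJ'I : S J' ⊆ S I := by
          rcases nested_total (P := J') (Q := I) ⟨x, hx, hxI⟩ with h | h
          · exact h
          · exact absurd h hI.2
        refine ⟨hI.1.1, hJ'I, fun hcon => hI.2 ?_, hI.1.2⟩
        rw [← hcon]
      · exact term_eq_of_not_mem a I hxI
  · -- the inner part equals ff J' x
    rw [Finset.filter_filter, ff]
    apply Finset.sum_congr _ (fun _ _ => rfl)
    apply Finset.filter_congr
    intro I _
    constructor
    · intro h; exact h.2
    · intro h; exact ⟨h.trans hJJ, h⟩

lemma gg_le_ff {J J' : ℤ × ℤ} {x : ℝ} (hx : x ∈ S J') (hJJ : S J' ⊆ S J) :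
    gg 𝓘 a J J' ≤ ff 𝓘 a J x := by
  rw [ff_decomp 𝓘 a hx hJJ]
  have := ff_nonneg 𝓘 a J' x
  linarith

/-- Going to the parent increases `gg` by at most the single-scale bound `A2`. -/
lemma gg_le_parent {J J' P : ℤ × ℤ} (hP1 : S J' ⊆ S P) (hP2 : P.1 = J'.1 + 1)
    {A2 : ℝ} (hA2 : ∀ I ∈ 𝓘, cf a I ≤ A2) (hA20 : 0 ≤ A2) :
    gg 𝓘 a J J' ≤ gg 𝓘 a J P + A2 := by
  classical
  rw [gg, ← Finset.sum_filter_add_sum_filter_not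
    (𝓘.filter (fun I => S J' ⊆ S I ∧ S J' ≠ S I ∧ S I ⊆ S J)) (fun I => S I ≠ S P)]
  have hJ'P : S J' ≠ S P := by
    intro h
    have := S_inj h
    rw [this] at hP2
    omega
  apply add_le_add
  · -- strictly bigger than parent
    apply Finset.sum_le_sum_of_subset_of_nonneg
    · intro I hI
      rw [Finset.mem_filter, Finset.mem_filter] at hI
      obtain ⟨⟨hI𝓘, h1, h2, h3⟩, h4⟩ := hI
      rw [Finset.mem_filter]
      have hPI : S P ⊆ S I := parent_min hP1 hP2 (ssubset_iff_subset_ne.mpr ⟨h1, h2⟩)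
      exact ⟨hI𝓘, hPI, fun hc => h4 hc.symm, h3⟩
    · intro I _ _
      exact cf_nonneg a I
  · -- the parent term itself
    have hsub : (𝓘.filter (fun I => S J' ⊆ S I ∧ S J' ≠ S I ∧ S I ⊆ S J)).filter
        (fun I => ¬ S I ≠ S P) ⊆ {P} := by
      intro I hI
      rw [Finset.mem_filter] at hI
      rw [Finset.mem_singleton]
      exact S_inj (not_ne_iff.mp hI.2)
    rcases Finset.subset_singleton_iff.mp hsub with h | h
    · rw [h, Finset.sum_empty]; exact hA20
    · rw [h, Finset.sum_singleton]
      have hPmem : P ∈ (𝓘.filter (fun I => S J' ⊆ S I ∧ S J' ≠ S I ∧ S I ⊆ S J)).filter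
          (fun I => ¬ S I ≠ S P) := by
        rw [h]; exact Finset.mem_singleton_self P
      rw [Finset.mem_filter, Finset.mem_filter] at hPmem
      exact hA2 P hPmem.1.1

lemma gg_self_eq_zero (J : ℤ × ℤ) {P : ℤ × ℤ} (hP : S P = S J) : gg 𝓘 a J P = 0 := by
  apply Finset.sum_eq_zero
  intro I hI
  rw [Finset.mem_filter] at hI
  exact absurd (Set.Subset.antisymm (hP ▸ hI.2.1) (hI.2.2.2.trans (le_of_eq hP.symm)))
    (fun h => hI.2.2.1 h)

/-- If every interval of the family containing `x` strictly contains `D`,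
then `f_J x ≤ g_{J,D}`. -/
lemma ff_le_gg_small {J D : ℤ × ℤ} {x : ℝ}
    (hsub : ∀ I ∈ 𝓘, S I ⊆ S J → x ∈ S I → (S D ⊆ S I ∧ S D ≠ S I)) :
    ff 𝓘 a J x ≤ gg 𝓘 a J D := by
  classical
  have h1 : ff 𝓘 a J x = ∑ I ∈ (𝓘.filter (fun I => S I ⊆ S J)).filter (fun I => x ∈ S I),
      cf a I := by
    rw [ff, ← Finset.sum_subset
      (Finset.filter_subset (fun I => x ∈ S I) (𝓘.filter (fun I => S I ⊆ S J)))
      (fun I hI hIn => term_eq_of_not_mem a I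
        (fun hxI => hIn (Finset.mem_filter.mpr ⟨hI, hxI⟩)))]
    apply Finset.sum_congr rfl
    intro I hI
    exact term_eq_of_mem a I (Finset.mem_filter.mp hI).2
  rw [h1, gg]
  apply Finset.sum_le_sum_of_subset_of_nonneg
  · intro I hI
    rw [Finset.mem_filter, Finset.mem_filter] at hI
    obtain ⟨⟨hI𝓘, hIJ⟩, hxI⟩ := hI
    obtain ⟨hd1, hd2⟩ := hsub I hI𝓘 hIJ hxI
    rw [Finset.mem_filter]
    exact ⟨hI𝓘, hd1, hd2, hIJ⟩
  · intro I _ _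
    exact cf_nonneg a I

end JN
namespace JN
open MeasureTheory Set

local notation "S" => dyadicSet

variable {𝓘 : Finset (ℤ × ℤ)} {a : ℤ × ℤ → ℂ} {s Ap A2 lam0 : ℝ}

lemma exists_mem_of_ff_pos {J : ℤ × ℤ} {x : ℝ} (h : 0 < ff 𝓘 a J x) :
    ∃ I ∈ 𝓘.filter (fun I => S I ⊆ S J), x ∈ S I := by
  by_contra hcon
  push_neg at hcon
  have : ff 𝓘 a J x = 0 :=
    Finset.sum_eq_zero fun I hI => term_eq_of_not_mem a I (hcon I hI)
  rw [this] at h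
  exact lt_irrefl 0 h

lemma half_meas (hs : 0 < s)
    (hint : ∀ K : ℤ × ℤ,
      ∫⁻ x : ℝ, ENNReal.ofReal (ff 𝓘 a K x ^ s) ≤ ENNReal.ofReal Ap * volume (S K))
    (hl0 : 0 < lam0) (hcheb : 2 * Ap ≤ lam0 ^ s) (K : ℤ × ℤ) :
    volume {x : ℝ | lam0 < ff 𝓘 a K x} ≤ 2⁻¹ * volume (S K) := by
  set B := ENNReal.ofReal (lam0 ^ s) with hB
  have hB0 : B ≠ 0 := by
    rw [hB, ne_eq, ENNReal.ofReal_eq_zero, not_le]; positivity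
  have hBt : B ≠ ⊤ := ENNReal.ofReal_ne_top
  have hApB : ENNReal.ofReal Ap ≤ 2⁻¹ * B := by
    rw [hB]
    calc ENNReal.ofReal Ap ≤ ENNReal.ofReal (lam0 ^ s / 2) :=
          ENNReal.ofReal_le_ofReal (by linarith)
    _ = ENNReal.ofReal (lam0 ^ s) / 2 := by
        rw [ENNReal.ofReal_div_of_pos (by norm_num)]
        norm_num
    _ = 2⁻¹ * ENNReal.ofReal (lam0 ^ s) := by
        rw [ENNReal.div_eq_inv_mul]
  calc volume {x : ℝ | lam0 < ff 𝓘 a K x}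
      ≤ B⁻¹ * ∫⁻ x : ℝ, ENNReal.ofReal (ff 𝓘 a K x ^ s) := cheb 𝓘 a K hl0 hs
  _ ≤ B⁻¹ * (ENNReal.ofReal Ap * volume (S K)) := mul_le_mul_right (hint K) _
  _ ≤ B⁻¹ * ((2⁻¹ * B) * volume (S K)) :=
      mul_le_mul_right (mul_le_mul_left hApB _) _
  _ = (B⁻¹ * B) * (2⁻¹ * volume (S K)) := by ring
  _ = 2⁻¹ * volume (S K) := by rw [ENNReal.inv_mul_cancel hB0 hBt, one_mul]

lemma dist_meas (hs : 0 < s)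
    (hint : ∀ K : ℤ × ℤ,
      ∫⁻ x : ℝ, ENNReal.ofReal (ff 𝓘 a K x ^ s) ≤ ENNReal.ofReal Ap * volume (S K))
    (hl0 : 0 < lam0) (hcheb : 2 * Ap ≤ lam0 ^ s)
    (hA2 : ∀ I ∈ 𝓘, cf a I ≤ A2) (hA20 : 0 ≤ A2) :
    ∀ (k : ℕ) (K : ℤ × ℤ),
      volume {x : ℝ | ((k : ℝ) + 1) * (lam0 + A2) < ff 𝓘 a K x}
        ≤ 2⁻¹ ^ (k + 1) * volume (S K) := by
  have hΛ0 : 0 < lam0 + A2 := by linarith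
  intro k
  induction k with
  | zero =>
    intro K
    have hsub : {x : ℝ | ((0 : ℝ) + 1) * (lam0 + A2) < ff 𝓘 a K x}
        ⊆ {x : ℝ | lam0 < ff 𝓘 a K x} := by
      intro x hx
      rw [Set.mem_setOf_eq] at hx ⊢
      nlinarith
    calc volume {x : ℝ | (((0:ℕ) : ℝ) + 1) * (lam0 + A2) < ff 𝓘 a K x}
        ≤ volume {x : ℝ | lam0 < ff 𝓘 a K x} := by
          apply measure_mono
          intro x hx
          apply hsub
          simpa using hx
    _ ≤ 2⁻¹ * volume (S K) := half_meas hs hint hl0 hcheb K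
    _ = 2⁻¹ ^ (0 + 1) * volume (S K) := by rw [pow_one]
  | succ k ih =>
    intro K
    set Λ : ℝ := lam0 + A2 with hΛ
    -- the stopping family
    set 𝒮 : Set (ℤ × ℤ) := {J' | S J' ⊆ S K ∧ S J' ≠ S K ∧ lam0 < gg 𝓘 a K J' ∧
      ∀ J'' : ℤ × ℤ, S J' ⊆ S J'' → S J'' ⊆ S K → S J'' ≠ S K → lam0 < gg 𝓘 a K J'' →
        S J'' = S J'} with h𝒮
    -- coverage
    have hcov : {x : ℝ | ((k : ℝ) + 1 + 1) * Λ < ff 𝓘 a K x}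
        ⊆ ⋃ J' ∈ 𝒮, (S J' ∩ {x : ℝ | ((k : ℝ) + 1) * Λ < ff 𝓘 a J' x}) := by
      intro x hx
      rw [Set.mem_setOf_eq] at hx
      have hffpos : 0 < ff 𝓘 a K x := lt_trans (by positivity) hx
      have hxK : x ∈ S K := mem_of_ff_pos 𝓘 a hffpos
      obtain ⟨I₁, hI₁T, hxI₁⟩ := exists_mem_of_ff_pos hffpos
      rw [Finset.mem_filter] at hI₁T
      set T := 𝓘.filter (fun I => S I ⊆ S K) with hT
      have hTne : (T.image Prod.fst).Nonempty :=
        ⟨I₁.1, Finset.mem_image_of_mem _ (Finset.mem_filter.mpr hI₁T)⟩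
      set j₀ : ℤ := (T.image Prod.fst).min' hTne - 1 with hj₀def
      have hj₀ : ∀ I ∈ T, j₀ < I.1 := by
        intro I hI
        have := Finset.min'_le (T.image Prod.fst) I.1 (Finset.mem_image_of_mem _ hI)
        omega
      have hDI : ∀ I ∈ 𝓘, S I ⊆ S K → x ∈ S I →
          (S (j₀, ⌊x / 2 ^ j₀⌋) ⊆ S I ∧ S (j₀, ⌊x / 2 ^ j₀⌋) ≠ S I) := by
        intro I hI hIK hxI
        have h1 : j₀ < I.1 := hj₀ I (Finset.mem_filter.mpr ⟨hI, hIK⟩)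
        have hsub : S (j₀, ⌊x / 2 ^ j₀⌋) ⊆ S I :=
          nested (by simpa using h1.le) ⟨x, mem_floor j₀ x, hxI⟩
        refine ⟨hsub, fun hc => ?_⟩
        have := S_inj hc
        rw [← this] at h1
        simp at h1
      have hffgg : ff 𝓘 a K x ≤ gg 𝓘 a K (j₀, ⌊x / 2 ^ j₀⌋) := ff_le_gg_small 𝓘 a hDI
      -- the predicate on scales
      set Pred : ℤ → Prop := fun j => S (j, ⌊x / 2 ^ j⌋) ⊆ S K ∧ S (j, ⌊x / 2 ^ j⌋) ≠ S K ∧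
        lam0 < gg 𝓘 a K (j, ⌊x / 2 ^ j⌋) with hPreddef
      have hPred₀ : Pred j₀ := by
        obtain ⟨hd1, hd2⟩ := hDI I₁ hI₁T.1 hI₁T.2 hxI₁
        refine ⟨hd1.trans hI₁T.2, ?_, ?_⟩
        · intro hc
          have h1 := hj₀ I₁ (Finset.mem_filter.mpr hI₁T)
          have h2 : j₀ ≤ K.1 := by
            have := S_inj hc
            rw [← this]
          have h3 : I₁.1 ≤ K.1 := subset_scale hI₁T.2
          have := S_inj hc
          have : j₀ = K.1 := by rw [← this]
          have h4 := subset_scale (hd1.trans hI₁T.2)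
          -- j₀ = K.1 but j₀ < I₁.1 ≤ K.1
          omega
        · calc lam0 ≤ Λ := by rw [hΛ]; linarith
          _ ≤ ((k : ℝ) + 1 + 1) * Λ := by nlinarith [hΛ0]
          _ < ff 𝓘 a K x := hx
          _ ≤ gg 𝓘 a K (j₀, ⌊x / 2 ^ j₀⌋) := hffgg
      have hbdd : ∀ j : ℤ, Pred j → j ≤ K.1 - 1 := by
        intro j hj
        have h1 : j ≤ K.1 := by
          have := subset_scale hj.1
          simpa using this
        rcases lt_or_eq_of_le h1 with h | h
        · omega
        · exfalso
          apply hj.2.1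
          have : ((j : ℤ), ⌊x / 2 ^ j⌋) = K :=
            eq_of_scale_eq_mem (by simpa using h) (mem_floor j x) hxK
          rw [this]
      obtain ⟨js, hPjs, hmax⟩ := Int.exists_greatest_of_bdd ⟨K.1 - 1, hbdd⟩ ⟨j₀, hPred₀⟩
      set J' : ℤ × ℤ := (js, ⌊x / 2 ^ js⌋) with hJ'def
      have hxJ' : x ∈ S J' := mem_floor js x
      have hStop : J' ∈ 𝒮 := by
        rw [h𝒮, Set.mem_setOf_eq]
        refine ⟨hPjs.1, hPjs.2.1, hPjs.2.2, ?_⟩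
        intro J'' h1 h2 h3 h4
        have hxJ'' : x ∈ S J'' := h1 hxJ'
        have hJ''eq : J'' = (J''.1, ⌊x / 2 ^ J''.1⌋) :=
          eq_of_scale_eq_mem rfl hxJ'' (mem_floor J''.1 x)
        have hPredJ'' : Pred J''.1 := by
          have hgoal : S (J''.1, ⌊x / 2 ^ J''.1⌋) ⊆ S K ∧ S (J''.1, ⌊x / 2 ^ J''.1⌋) ≠ S K ∧
              lam0 < gg 𝓘 a K (J''.1, ⌊x / 2 ^ J''.1⌋) := by
            rw [← hJ''eq]
            exact ⟨h2, h3, h4⟩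
          exact hgoal
        have hle : J''.1 ≤ js := hmax _ hPredJ''
        have hge : js ≤ J''.1 := subset_scale h1
        have : J'' = J' := eq_of_scale_eq_mem (by simpa using le_antisymm hle hge) hxJ'' hxJ'
        rw [this]
      -- bound gg K J' ≤ Λ
      obtain ⟨P, hP1, hP2⟩ := exists_parent J'
      have hPK : S P ⊆ S K := by
        have hj1 : P.1 ≤ K.1 := by
          have h5 : js ≤ K.1 - 1 := hbdd js hPjs
          have h6 : P.1 = js + 1 := hP2
          omega
        exact nested hj1 ⟨x, hP1 hxJ', hxK⟩
      have hggP : gg 𝓘 a K P ≤ lam0 := by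
        by_cases hPKeq : S P = S K
        · rw [gg_self_eq_zero 𝓘 a K hPKeq]
          exact hl0.le
        · by_contra hcon
          push_neg at hcon
          have heq := hStop.2.2.2 P hP1 hPK hPKeq hcon
          have := S_inj heq
          rw [this] at hP2
          simp only [hJ'def] at hP2
          omega
      have hggJ' : gg 𝓘 a K J' ≤ Λ := by
        have := gg_le_parent 𝓘 a (J := K) hP1 hP2 hA2 hA20
        rw [hΛ]
        linarith
      -- conclude
      apply Set.mem_biUnion hStop
      refine ⟨hxJ', ?_⟩
      rw [Set.mem_setOf_eq]
      have hdec := ff_decomp 𝓘 a hxJ' hPjs.1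
      have hgg0 := gg_nonneg 𝓘 a K J'
      nlinarith [hx, hggJ', hdec]
    -- disjointness
    have hdisj : 𝒮.PairwiseDisjoint S := by
      intro J₁ h₁ J₂ h₂ hne
      rw [h𝒮, Set.mem_setOf_eq] at h₁ h₂
      rw [Function.onFun]
      by_contra hdis
      obtain ⟨x, hx1, hx2⟩ := Set.not_disjoint_iff.mp hdis
      rcases nested_total ⟨x, hx1, hx2⟩ with h | h
      · exact hne (S_inj (h₁.2.2.2 J₂ h h₂.1 h₂.2.1 h₂.2.2.1)).symm
      · exact hne (S_inj (h₂.2.2.2 J₁ h h₁.1 h₁.2.1 h₁.2.2.1))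
    -- union of stopping intervals sits inside the level set at lam0
    have hcup : (⋃ J' ∈ 𝒮, S J') ⊆ {x : ℝ | lam0 < ff 𝓘 a K x} := by
      intro x hx
      rw [Set.mem_iUnion₂] at hx
      obtain ⟨J', hJ'𝒮, hxJ'⟩ := hx
      rw [h𝒮, Set.mem_setOf_eq] at hJ'𝒮
      rw [Set.mem_setOf_eq]
      calc lam0 < gg 𝓘 a K J' := hJ'𝒮.2.2.1
      _ ≤ ff 𝓘 a K x := gg_le_ff 𝓘 a hxJ' hJ'𝒮.1
    -- the measure computation
    have hcount : 𝒮.Countable := Set.to_countable 𝒮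
    calc volume {x : ℝ | ((↑(k+1) : ℝ) + 1) * (lam0 + A2) < ff 𝓘 a K x}
        = volume {x : ℝ | ((k : ℝ) + 1 + 1) * Λ < ff 𝓘 a K x} := by
          congr 1
          ext y
          rw [Set.mem_setOf_eq, Set.mem_setOf_eq, hΛ]
          push_cast
          constructor <;> intro <;> linarith
    _ ≤ volume (⋃ J' ∈ 𝒮, (S J' ∩ {x : ℝ | ((k : ℝ) + 1) * Λ < ff 𝓘 a J' x})) :=
        measure_mono hcov
    _ ≤ ∑' (J' : ↑𝒮), volume (S J'.1 ∩ {x : ℝ | ((k : ℝ) + 1) * Λ < ff 𝓘 a J'.1 x}) :=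
        measure_biUnion_le volume hcount _
    _ ≤ ∑' (J' : ↑𝒮), 2⁻¹ ^ (k + 1) * volume (S J'.1) := by
        apply ENNReal.tsum_le_tsum
        intro J'
        calc volume (S J'.1 ∩ {x : ℝ | ((k : ℝ) + 1) * Λ < ff 𝓘 a J'.1 x})
            ≤ volume {x : ℝ | ((k : ℝ) + 1) * Λ < ff 𝓘 a J'.1 x} :=
              measure_mono Set.inter_subset_right
        _ ≤ 2⁻¹ ^ (k + 1) * volume (S J'.1) := ih J'.1
    _ = 2⁻¹ ^ (k + 1) * ∑' (J' : ↑𝒮), volume (S J'.1) := ENNReal.tsum_mul_left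
    _ = 2⁻¹ ^ (k + 1) * volume (⋃ J' ∈ 𝒮, S J') := by
        rw [measure_biUnion hcount hdisj (fun J' _ => meas_S J')]
    _ ≤ 2⁻¹ ^ (k + 1) * volume {x : ℝ | lam0 < ff 𝓘 a K x} :=
        mul_le_mul_right (measure_mono hcup) _
    _ ≤ 2⁻¹ ^ (k + 1) * (2⁻¹ * volume (S K)) :=
        mul_le_mul_right (half_meas hs hint hl0 hcheb K) _
    _ = 2⁻¹ ^ (k + 1 + 1) * volume (S K) := by
        ring

end JN
namespace JN
open MeasureTheory Set

local notation "S" => dyadicSet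

variable {𝓘 : Finset (ℤ × ℤ)} {a : ℤ × ℤ → ℂ}

lemma ofReal_half : ENNReal.ofReal (1/2 : ℝ) = 2⁻¹ := by
  rw [ENNReal.ofReal_div_of_pos (by norm_num)]
  norm_num

lemma summable_aux (m : ℕ) : Summable (fun n : ℕ => ((n:ℝ) + 1) ^ m * (1/2:ℝ) ^ n) := by
  have hgeom : Summable (fun n : ℕ => (n:ℝ) ^ m * (1/2:ℝ) ^ n) :=
    summable_pow_mul_geometric_of_norm_lt_one m
      (by rw [Real.norm_eq_abs, abs_of_pos (by norm_num : (0:ℝ) < 1/2)]; norm_num)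
  have h1 := (summable_nat_add_iff 1).mpr hgeom
  have h2 := h1.mul_left 2
  apply h2.congr
  intro n
  push_cast
  rw [pow_succ]
  ring

lemma lintegral_rpow_le_of_dist {Λ t : ℝ} (hΛ : 0 < Λ) (ht : 0 < t)
    (hdist : ∀ (k : ℕ) (K : ℤ × ℤ),
      volume {x : ℝ | ((k:ℝ) + 1) * Λ < ff 𝓘 a K x} ≤ 2⁻¹ ^ (k+1) * volume (S K))
    (K : ℤ × ℤ) :
    ∫⁻ x : ℝ, ENNReal.ofReal (ff 𝓘 a K x ^ t)
      ≤ ENNReal.ofReal (Λ ^ t * (∑' k : ℕ, ((k:ℝ) + 1) ^ (⌈t⌉₊) * (1/2:ℝ) ^ k))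
          * volume (S K) := by
  classical
  set m := ⌈t⌉₊ with hm
  set D : ℕ → Set ℝ := fun k => {x : ℝ | (k:ℝ) * Λ < ff 𝓘 a K x}
    ∩ {x : ℝ | ff 𝓘 a K x ≤ ((k:ℝ) + 1) * Λ} with hD
  have hDmeas : ∀ k, MeasurableSet (D k) := by
    intro k
    exact (measurableSet_lt measurable_const (ff_measurable 𝓘 a K)).inter
      (measurableSet_le (ff_measurable 𝓘 a K) measurable_const)
  have hpt : ∀ x : ℝ, ENNReal.ofReal (ff 𝓘 a K x ^ t)
      ≤ ∑' k : ℕ, (D k).indicator (fun _ => ENNReal.ofReal ((((k:ℝ) + 1) * Λ) ^ t)) x := by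
    intro x
    by_cases hpos : 0 < ff 𝓘 a K x
    · set y := ff 𝓘 a K x with hy
      have hc1 : 1 ≤ ⌈y / Λ⌉₊ := Nat.one_le_ceil_iff.mpr (div_pos hpos hΛ)
      set n := ⌈y / Λ⌉₊ - 1 with hn
      have hn1 : (n : ℝ) + 1 = (⌈y / Λ⌉₊ : ℝ) := by
        rw [hn]
        push_cast [Nat.cast_sub hc1]
        ring
      have hupper : y ≤ ((n:ℝ) + 1) * Λ := by
        rw [hn1]
        calc y = y / Λ * Λ := by field_simp
        _ ≤ (⌈y / Λ⌉₊ : ℝ) * Λ := by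
            apply mul_le_mul_of_nonneg_right (Nat.le_ceil _) hΛ.le
      have hlower : (n:ℝ) * Λ < y := by
        have h2 : (⌈y / Λ⌉₊ : ℝ) < y / Λ + 1 := Nat.ceil_lt_add_one (by positivity)
        have h3 : (n : ℝ) < y / Λ := by
          rw [← hn1] at h2
          linarith
        calc (n:ℝ) * Λ < y / Λ * Λ := by
              apply mul_lt_mul_of_pos_right h3 hΛ
        _ = y := by field_simp
      have hxD : x ∈ D n := ⟨hlower, hupper⟩
      calc ENNReal.ofReal (y ^ t) ≤ ENNReal.ofReal ((((n:ℝ) + 1) * Λ) ^ t) :=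
            ENNReal.ofReal_le_ofReal (Real.rpow_le_rpow (ff_nonneg 𝓘 a K x) hupper ht.le)
      _ = (D n).indicator (fun _ => ENNReal.ofReal ((((n:ℝ) + 1) * Λ) ^ t)) x := by
            rw [Set.indicator_of_mem hxD]
      _ ≤ ∑' k : ℕ, (D k).indicator (fun _ => ENNReal.ofReal ((((k:ℝ) + 1) * Λ) ^ t)) x :=
            ENNReal.le_tsum n
    · have h0 : ff 𝓘 a K x = 0 := le_antisymm (not_lt.mp hpos) (ff_nonneg 𝓘 a K x)
      rw [h0, Real.zero_rpow (ne_of_gt ht), ENNReal.ofReal_zero]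
      exact zero_le
  have hmeasD : ∀ k, volume (D k) ≤ 2⁻¹ ^ k * volume (S K) := by
    intro k
    cases k with
    | zero =>
      have hsub : D 0 ⊆ S K := by
        intro x hx
        apply mem_of_ff_pos 𝓘 a
        have := hx.1
        rw [Set.mem_setOf_eq] at this
        simpa using this
      rw [pow_zero, one_mul]
      exact measure_mono hsub
    | succ k =>
      have hsub : D (k+1) ⊆ {x : ℝ | ((k:ℝ) + 1) * Λ < ff 𝓘 a K x} := by
        intro x hx
        have := hx.1
        rw [Set.mem_setOf_eq] at this ⊢
        push_cast at this
        linarith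
      exact le_trans (measure_mono hsub) (hdist k K)
  set w : ℕ → ENNReal := fun k => ENNReal.ofReal (Λ ^ t * (((k:ℝ) + 1) ^ m * (1/2:ℝ) ^ k))
    with hw
  have hterm : ∀ k : ℕ, ENNReal.ofReal ((((k:ℝ) + 1) * Λ) ^ t) * volume (D k)
      ≤ w k * volume (S K) := by
    intro k
    have h1 : ENNReal.ofReal ((((k:ℝ) + 1) * Λ) ^ t) * (2⁻¹ ^ k) ≤ w k := by
      rw [← ofReal_half, ← ENNReal.ofReal_pow (by norm_num), ← ENNReal.ofReal_mul
        (Real.rpow_nonneg (by positivity) t)]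
      apply ENNReal.ofReal_le_ofReal
      rw [← mul_assoc]
      apply mul_le_mul_of_nonneg_right _ (by positivity)
      rw [Real.mul_rpow (by positivity) hΛ.le, mul_comm]
      apply mul_le_mul_of_nonneg_left _ (Real.rpow_nonneg hΛ.le t)
      calc ((k:ℝ) + 1) ^ t ≤ ((k:ℝ) + 1) ^ (m:ℝ) :=
            Real.rpow_le_rpow_of_exponent_le (by linarith [Nat.cast_nonneg (α := ℝ) k])
              (hm ▸ Nat.le_ceil t)
      _ = ((k:ℝ) + 1) ^ m := Real.rpow_natCast _ m
    calc ENNReal.ofReal ((((k:ℝ) + 1) * Λ) ^ t) * volume (D k)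
        ≤ ENNReal.ofReal ((((k:ℝ) + 1) * Λ) ^ t) * (2⁻¹ ^ k * volume (S K)) :=
          mul_le_mul_right (hmeasD k) _
    _ = (ENNReal.ofReal ((((k:ℝ) + 1) * Λ) ^ t) * 2⁻¹ ^ k) * volume (S K) := by ring
    _ ≤ w k * volume (S K) := mul_le_mul_left h1 _
  have hsum : Summable (fun k : ℕ => Λ ^ t * (((k:ℝ) + 1) ^ m * (1/2:ℝ) ^ k)) :=
    (summable_aux m).mul_left _
  calc ∫⁻ x : ℝ, ENNReal.ofReal (ff 𝓘 a K x ^ t)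
      ≤ ∫⁻ x : ℝ, ∑' k : ℕ, (D k).indicator
          (fun _ => ENNReal.ofReal ((((k:ℝ) + 1) * Λ) ^ t)) x := lintegral_mono hpt
  _ = ∑' k : ℕ, ∫⁻ x : ℝ, (D k).indicator
        (fun _ => ENNReal.ofReal ((((k:ℝ) + 1) * Λ) ^ t)) x :=
      lintegral_tsum (fun k => (measurable_const.indicator (hDmeas k)).aemeasurable)
  _ = ∑' k : ℕ, ENNReal.ofReal ((((k:ℝ) + 1) * Λ) ^ t) * volume (D k) := by
      apply tsum_congr
      intro k
      rw [lintegral_indicator (hDmeas k), setLIntegral_const]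
  _ ≤ ∑' k : ℕ, w k * volume (S K) := ENNReal.tsum_le_tsum hterm
  _ = (∑' k : ℕ, w k) * volume (S K) := ENNReal.tsum_mul_right
  _ = ENNReal.ofReal (∑' k : ℕ, Λ ^ t * (((k:ℝ) + 1) ^ m * (1/2:ℝ) ^ k)) * volume (S K) := by
      rw [ENNReal.ofReal_tsum_of_nonneg (fun k => by positivity) hsum]
  _ = ENNReal.ofReal (Λ ^ t * (∑' k : ℕ, ((k:ℝ) + 1) ^ m * (1/2:ℝ) ^ k)) * volume (S K) := by
      rw [tsum_mul_left]

end JN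
namespace JN
open MeasureTheory Set

local notation "S" => dyadicSet

/-- The constant in the hard direction. -/
def C0 (p q : ℝ) : ℝ :=
  (((2:ℝ) ^ ((2:ℝ)/p) + 1) ^ (q/2) * (∑' k : ℕ, ((k:ℝ) + 1) ^ (⌈q/2⌉₊) * (1/2:ℝ) ^ k)) ^ (1/q)

lemma Ct_nonneg (q : ℝ) : 0 ≤ ∑' k : ℕ, ((k:ℝ) + 1) ^ (⌈q/2⌉₊) * (1/2:ℝ) ^ k :=
  tsum_nonneg fun k => by positivity

lemma C0_nonneg (p q : ℝ) : 0 ≤ C0 p q := by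
  apply Real.rpow_nonneg
  have h1 : (0:ℝ) ≤ ((2:ℝ) ^ ((2:ℝ)/p) + 1) ^ (q/2) :=
    Real.rpow_nonneg (by positivity) _
  exact mul_nonneg h1 (Ct_nonneg q)

lemma hard {p q : ℝ} (hp : 0 < p) (hq : 0 < q) (𝓘 : Finset (ℤ × ℤ)) (a : ℤ × ℤ → ℂ) :
    bmoNorm 𝓘 a q ≤ C0 p q * bmoNorm 𝓘 a p := by
  classical
  set N := bmoNorm 𝓘 a p with hNdef
  have hN0 : 0 ≤ N := bmo_nonneg 𝓘 a p
  set Ct := ∑' k : ℕ, ((k:ℝ) + 1) ^ (⌈q/2⌉₊) * (1/2:ℝ) ^ k with hCt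
  have hCt0 : 0 ≤ Ct := Ct_nonneg q
  rcases eq_or_lt_of_le hN0 with hN | hNpos
  · -- degenerate case: all coefficients vanish
    have hcf : ∀ I ∈ 𝓘, cf a I = 0 := by
      intro I hI
      refine le_antisymm ?_ (cf_nonneg a I)
      have := cf_le_sq 𝓘 a hI hp
      rw [← hNdef, ← hN, Real.zero_rpow (by norm_num : (2:ℝ) ≠ 0)] at this
      exact this
    have hffz : ∀ (K : ℤ × ℤ) (x : ℝ), ff 𝓘 a K x = 0 := by
      intro K x
      apply Finset.sum_eq_zero
      intro I hI
      rw [Finset.mem_filter] at hI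
      have : ‖a I‖ ^ 2 / dyadicLen I = cf a I := rfl
      rw [this, hcf I hI.1, zero_mul]
    have hq2 : (q:ℝ)/2 ≠ 0 := by positivity
    have hterm : ∀ I₀ : {p // p ∈ 𝓘},
        dyadicLen I₀.1 ^ (-(1:ℝ)/q) * (∫ x : ℝ, (ff 𝓘 a I₀.1 x) ^ (q/2)) ^ (1/q) = 0 := by
      intro I₀
      have : (∫ x : ℝ, (ff 𝓘 a I₀.1 x) ^ (q/2)) = 0 := by
        have : ∀ x : ℝ, (ff 𝓘 a I₀.1 x) ^ (q/2) = 0 := by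
          intro x
          rw [hffz, Real.zero_rpow hq2]
        simp only [this]
        exact integral_zero ℝ ℝ
      rw [this, Real.zero_rpow (by positivity : (1:ℝ)/q ≠ 0), mul_zero]
    have : bmoNorm 𝓘 a q ≤ 0 := by
      rw [bmoNorm_eq]
      apply Real.iSup_le _ le_rfl
      intro I₀
      rw [hterm I₀]
    calc bmoNorm 𝓘 a q ≤ 0 := this
    _ ≤ C0 p q * N := mul_nonneg (C0_nonneg p q) hN0
  · -- main case
    set A2 := N ^ (2:ℝ) with hA2def
    set lam0 := (2:ℝ) ^ ((2:ℝ)/p) * A2 with hlam0def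
    have hA2pos : 0 < A2 := Real.rpow_pos_of_pos hNpos _
    have hl0 : 0 < lam0 := mul_pos (Real.rpow_pos_of_pos (by norm_num) _) hA2pos
    have hA2 : ∀ I ∈ 𝓘, cf a I ≤ A2 := fun I hI => cf_le_sq 𝓘 a hI hp
    have hint : ∀ K : ℤ × ℤ,
        ∫⁻ x : ℝ, ENNReal.ofReal (ff 𝓘 a K x ^ (p/2))
          ≤ ENNReal.ofReal (N ^ p) * volume (S K) :=
      lintegral_rpow_ff_le 𝓘 a (p/2) (by positivity) (N ^ p)
        (fun I₀ hI₀ => integral_le_of_mem 𝓘 a hI₀ hp)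
    have hcheb : 2 * N ^ p ≤ lam0 ^ (p/2) := by
      have h1 : lam0 ^ (p/2) = 2 * N ^ p := by
        rw [hlam0def, Real.mul_rpow (by positivity) hA2pos.le]
        congr 1
        · rw [← Real.rpow_mul (by norm_num : (0:ℝ) ≤ 2),
            show (2:ℝ)/p * (p/2) = 1 by field_simp, Real.rpow_one]
        · rw [hA2def, ← Real.rpow_mul hN0, show (2:ℝ) * (p/2) = p by ring]
      rw [h1]
    have hdist := dist_meas (by positivity : (0:ℝ) < p/2) hint hl0 hcheb hA2 hA2pos.le
    have hΛpos : 0 < lam0 + A2 := by linarith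
    have hlint := lintegral_rpow_le_of_dist hΛpos (by positivity : (0:ℝ) < q/2) hdist
    -- real-variable integral bound for each I₀
    have hreal : ∀ I₀ : ℤ × ℤ,
        (∫ x : ℝ, ff 𝓘 a I₀ x ^ (q/2))
          ≤ (lam0 + A2) ^ (q/2) * Ct * dyadicLen I₀ := by
      intro I₀
      have h2 := hlint I₀
      rw [← ofReal_integral_rpow 𝓘 a I₀ (by positivity : (0:ℝ) < q/2), volume_S,
        ← ENNReal.ofReal_mul (mul_nonneg (Real.rpow_nonneg hΛpos.le _) hCt0)] at h2
      exact (ENNReal.ofReal_le_ofReal_iff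
        (mul_nonneg (mul_nonneg (Real.rpow_nonneg hΛpos.le _) hCt0) (len_pos I₀).le)).mp h2
    -- supremum bound
    have hbound : ∀ I₀ : {pp // pp ∈ 𝓘},
        dyadicLen I₀.1 ^ (-(1:ℝ)/q) * (∫ x : ℝ, (ff 𝓘 a I₀.1 x) ^ (q/2)) ^ (1/q)
          ≤ C0 p q * N := by
      intro I₀
      set len := dyadicLen I₀.1 with hlen
      have hlenpos : 0 < len := len_pos I₀.1
      have hX0 : 0 ≤ ∫ x : ℝ, (ff 𝓘 a I₀.1 x) ^ (q/2) := integral_rpow_nonneg 𝓘 a I₀.1 _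
      have h3 : (∫ x : ℝ, (ff 𝓘 a I₀.1 x) ^ (q/2)) ^ ((1:ℝ)/q)
          ≤ ((lam0 + A2) ^ (q/2) * Ct) ^ ((1:ℝ)/q) * len ^ ((1:ℝ)/q) := by
        rw [← Real.mul_rpow (mul_nonneg (Real.rpow_nonneg hΛpos.le _) hCt0) hlenpos.le]
        exact Real.rpow_le_rpow hX0 (hreal I₀.1) (by positivity)
      have h4 : len ^ (-(1:ℝ)/q) * (len ^ ((1:ℝ)/q)) = 1 := by
        rw [← Real.rpow_add hlenpos, show (-(1:ℝ)/q + 1/q) = 0 by ring, Real.rpow_zero]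
      have h5 : ((lam0 + A2) ^ (q/2) * Ct) ^ ((1:ℝ)/q) = C0 p q * N := by
        have hΛeq : lam0 + A2 = ((2:ℝ) ^ ((2:ℝ)/p) + 1) * N ^ (2:ℝ) := by
          rw [hlam0def, hA2def]; ring
        rw [hΛeq, Real.mul_rpow (by positivity : (0:ℝ) ≤ (2:ℝ) ^ ((2:ℝ)/p) + 1)
          (Real.rpow_nonneg hN0 _),
          ← Real.rpow_mul hN0, show (2:ℝ) * (q/2) = q by ring]
        rw [show ((2:ℝ) ^ ((2:ℝ)/p) + 1) ^ (q/2) * N ^ q * Ct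
            = (((2:ℝ) ^ ((2:ℝ)/p) + 1) ^ (q/2) * Ct) * N ^ q by ring]
        rw [Real.mul_rpow (mul_nonneg (Real.rpow_nonneg (by positivity) _) hCt0)
          (Real.rpow_nonneg hN0 _),
          ← Real.rpow_mul hN0, show q * ((1:ℝ)/q) = 1 by field_simp, Real.rpow_one]
        rw [C0, hCt]
      calc dyadicLen I₀.1 ^ (-(1:ℝ)/q) * (∫ x : ℝ, (ff 𝓘 a I₀.1 x) ^ (q/2)) ^ (1/q)
          ≤ len ^ (-(1:ℝ)/q) * (((lam0 + A2) ^ (q/2) * Ct) ^ ((1:ℝ)/q) * len ^ ((1:ℝ)/q)) :=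
            mul_le_mul_of_nonneg_left h3 (Real.rpow_nonneg hlenpos.le _)
      _ = ((lam0 + A2) ^ (q/2) * Ct) ^ ((1:ℝ)/q) * (len ^ (-(1:ℝ)/q) * len ^ ((1:ℝ)/q)) := by
            ring
      _ = C0 p q * N := by rw [h4, mul_one, h5]
    rw [bmoNorm_eq]
    exact Real.iSup_le hbound (mul_nonneg (C0_nonneg p q) hN0)

end JN
namespace JN
open MeasureTheory Set

local notation "S" => dyadicSet

lemma easy {p q : ℝ} (hp : 0 < p) (hpq : p < q) (𝓘 : Finset (ℤ × ℤ)) (a : ℤ × ℤ → ℂ) :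
    bmoNorm 𝓘 a p ≤ bmoNorm 𝓘 a q := by
  classical
  have hq : 0 < q := lt_trans hp hpq
  -- conjugate exponents
  set r : ℝ := q / p with hrdef
  have hr1 : 1 < r := (one_lt_div hp).mpr hpq
  have hr0 : 0 < r := lt_trans one_pos hr1
  set r' : ℝ := r / (r - 1) with hr'def
  have hr'pos : 0 < r' := div_pos hr0 (by linarith)
  have hconj : Real.HolderConjugate r r' := by
    rw [hr'def]
    exact Real.HolderConjugate.conjExponent hr1
  have hinvr' : 1 / r' = 1 - p / q := by
    rw [hr'def, hrdef]
    have h1 : q / p - 1 ≠ 0 := by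
      have := (one_lt_div hp).mpr hpq
      linarith
    field_simp
  rw [bmoNorm_eq 𝓘 a p]
  apply Real.iSup_le _ (bmo_nonneg 𝓘 a q)
  intro I₀
  set len := dyadicLen I₀.1 with hlendef
  have hlenpos : 0 < len := len_pos I₀.1
  set G : ℝ → ENNReal := fun x => ENNReal.ofReal (ff 𝓘 a I₀.1 x ^ (p/2)) with hG
  have hGmeas : Measurable G := (rpow_ff_measurable 𝓘 a I₀.1 (by positivity)).ennreal_ofReal
  set μ' := volume.restrict (S I₀.1) with hμ'
  -- the p-integral localizes to S I₀
  have hloc : ∫⁻ x : ℝ, G x = ∫⁻ x : ℝ, G x ∂μ' := by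
    have hGind : (S I₀.1).indicator G = G := by
      funext x
      by_cases hx : x ∈ S I₀.1
      · rw [Set.indicator_of_mem hx]
      · rw [Set.indicator_of_notMem hx, hG]
        simp only
        rw [ff_eq_zero_of_not_mem 𝓘 a I₀.1 hx, Real.zero_rpow (by positivity : (p:ℝ)/2 ≠ 0),
          ENNReal.ofReal_zero]
    rw [hμ', ← lintegral_indicator (meas_S I₀.1), hGind]
  -- Hölder
  have hH := ENNReal.lintegral_mul_le_Lp_mul_Lq μ' hconj hGmeas.aemeasurable
    (aemeasurable_const (b := (1:ENNReal)))
  simp only [Pi.mul_apply, mul_one, ENNReal.one_rpow, lintegral_one,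
    Measure.restrict_apply_univ] at hH
  -- identify G^r with the q-power
  have hGr : ∀ x : ℝ, G x ^ r = ENNReal.ofReal (ff 𝓘 a I₀.1 x ^ (q/2)) := by
    intro x
    rw [hG]
    simp only
    rw [ENNReal.ofReal_rpow_of_nonneg (Real.rpow_nonneg (ff_nonneg 𝓘 a I₀.1 x) _) hr0.le,
      ← Real.rpow_mul (ff_nonneg 𝓘 a I₀.1 x), hrdef,
      show p / 2 * (q / p) = q / 2 by field_simp]
  have hq2 : ∫⁻ x : ℝ, G x ^ r ∂μ' ≤ ENNReal.ofReal (∫ x : ℝ, ff 𝓘 a I₀.1 x ^ (q/2)) := by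
    rw [ofReal_integral_rpow 𝓘 a I₀.1 (by positivity : (0:ℝ) < q/2)]
    calc ∫⁻ x : ℝ, G x ^ r ∂μ'
        = ∫⁻ x in S I₀.1, ENNReal.ofReal (ff 𝓘 a I₀.1 x ^ (q/2)) := by
          rw [hμ']
          apply lintegral_congr
          intro x
          rw [hGr]
    _ ≤ ∫⁻ x : ℝ, ENNReal.ofReal (ff 𝓘 a I₀.1 x ^ (q/2)) :=
          setLIntegral_le_lintegral _ _
  -- put things together in ℝ≥0∞
  set X := ∫ x : ℝ, ff 𝓘 a I₀.1 x ^ (q/2) with hX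
  have hX0 : 0 ≤ X := integral_rpow_nonneg 𝓘 a I₀.1 _
  have hkey : ENNReal.ofReal (∫ x : ℝ, ff 𝓘 a I₀.1 x ^ (p/2))
      ≤ ENNReal.ofReal (X ^ (1/r) * len ^ (1/r')) := by
    rw [ofReal_integral_rpow 𝓘 a I₀.1 (by positivity : (0:ℝ) < p/2)]
    calc ∫⁻ x : ℝ, G x = ∫⁻ x : ℝ, G x ∂μ' := hloc
    _ ≤ (∫⁻ x : ℝ, G x ^ r ∂μ') ^ (1/r) * (μ' Set.univ) ^ (1/r') := hH
    _ ≤ (ENNReal.ofReal X) ^ (1/r) * (ENNReal.ofReal len) ^ (1/r') := by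
        apply mul_le_mul'
        · exact ENNReal.rpow_le_rpow hq2 (by positivity)
        · rw [hμ', Measure.restrict_apply_univ, volume_S]
    _ = ENNReal.ofReal (X ^ (1/r) * len ^ (1/r')) := by
        rw [ENNReal.ofReal_rpow_of_nonneg hX0 (by positivity),
          ENNReal.ofReal_rpow_of_nonneg hlenpos.le (by positivity),
          ENNReal.ofReal_mul (Real.rpow_nonneg hX0 _)]
  have hrealkey : (∫ x : ℝ, ff 𝓘 a I₀.1 x ^ (p/2)) ≤ X ^ (1/r) * len ^ (1/r') :=
    (ENNReal.ofReal_le_ofReal_iff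
      (mul_nonneg (Real.rpow_nonneg hX0 _) (Real.rpow_nonneg hlenpos.le _))).mp hkey
  -- the final rpow algebra
  have hterm : len ^ (-(1:ℝ)/p) * (∫ x : ℝ, ff 𝓘 a I₀.1 x ^ (p/2)) ^ ((1:ℝ)/p)
      ≤ len ^ (-(1:ℝ)/q) * X ^ ((1:ℝ)/q) := by
    have h6 : (∫ x : ℝ, ff 𝓘 a I₀.1 x ^ (p/2)) ^ ((1:ℝ)/p)
        ≤ (X ^ (1/r) * len ^ (1/r')) ^ ((1:ℝ)/p) :=
      Real.rpow_le_rpow (integral_rpow_nonneg 𝓘 a I₀.1 _) hrealkey (by positivity)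
    have h7 : (X ^ (1/r) * len ^ (1/r')) ^ ((1:ℝ)/p)
        = X ^ ((1:ℝ)/q) * len ^ ((1/r') * (1/p)) := by
      rw [Real.mul_rpow (Real.rpow_nonneg hX0 _) (Real.rpow_nonneg hlenpos.le _),
        ← Real.rpow_mul hX0, ← Real.rpow_mul hlenpos.le]
      congr 2
      rw [hrdef]
      field_simp
    calc len ^ (-(1:ℝ)/p) * (∫ x : ℝ, ff 𝓘 a I₀.1 x ^ (p/2)) ^ ((1:ℝ)/p)
        ≤ len ^ (-(1:ℝ)/p) * (X ^ (1/r) * len ^ (1/r')) ^ ((1:ℝ)/p) :=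
          mul_le_mul_of_nonneg_left h6 (Real.rpow_nonneg hlenpos.le _)
    _ = X ^ ((1:ℝ)/q) * (len ^ (-(1:ℝ)/p) * len ^ ((1/r') * (1/p))) := by
          rw [h7]; ring
    _ = len ^ (-(1:ℝ)/q) * X ^ ((1:ℝ)/q) := by
          rw [← Real.rpow_add hlenpos]
          rw [show -(1:ℝ)/p + (1/r') * (1/p) = -(1:ℝ)/q by
            rw [hinvr']
            field_simp
            ring]
          ring
  calc dyadicLen I₀.1 ^ (-(1:ℝ)/p) * (∫ x : ℝ, ff 𝓘 a I₀.1 x ^ (p/2)) ^ ((1:ℝ)/p)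
      ≤ len ^ (-(1:ℝ)/q) * X ^ ((1:ℝ)/q) := hterm
  _ ≤ bmoNorm 𝓘 a q := term_le_bmo 𝓘 a I₀.2 q

end JN

/-- John–Nirenberg for phase-space BMO: for 0 < p < q < ∞ the BMO(p) and BMO(q) norms are
comparable, with constants depending only on p and q. -/
theorem statement3 (p q : ℝ) (hp : 0 < p) (hpq : p < q) :
    ∃ c C : ℝ, 0 < c ∧ c ≤ C ∧
      ∀ (𝓘 : Finset (ℤ × ℤ)) (a : ℤ × ℤ → ℂ),
        c * bmoNorm 𝓘 a p ≤ bmoNorm 𝓘 a q ∧ bmoNorm 𝓘 a q ≤ C * bmoNorm 𝓘 a p := by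
  refine ⟨1, max 1 (JN.C0 p q), one_pos, le_max_left 1 _, ?_⟩
  intro 𝓘 a
  constructor
  · rw [one_mul]
    exact JN.easy hp hpq 𝓘 a
  · calc bmoNorm 𝓘 a q ≤ JN.C0 p q * bmoNorm 𝓘 a p := JN.hard hp (lt_trans hp hpq) 𝓘 a
    _ ≤ max 1 (JN.C0 p q) * bmoNorm 𝓘 a p :=
        mul_le_mul_of_nonneg_right (le_max_right _ _) (JN.bmo_nonneg 𝓘 a p)

end
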